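/- Let A be a non-negative irreducible real square matrix that is not the 1×1 zero matrix. Then the spectral radius ρ_A of A is strictly positive and is itself an eigenvalue of A. -/

import Mathlib

open Matrix Polynomial Finset


/-- The spectral radius of a real square matrix: the supremum of the moduli of its
complex eigenvalues. -/
noncomputable def specRad {k : ℕ} (A : Matrix (Fin k) (Fin k) ℝ) : ℝ :=
  sSup ((fun μ : ℂ => ‖μ‖) '' spectrum ℂ (A.map (algebraMap ℝ ℂ)))

/-- A non-negative square matrix is irreducible if for every pair of indices `i, j`
there is `n ≥ 1` with `(A ^ n) i j > 0`. -/
def MatIrreducible {k : ℕ} (A : Matrix (Fin k) (Fin k) ℝ) : Prop :=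
  ∀ i j : Fin k, ∃ n : ℕ, 1 ≤ n ∧ 0 < (A ^ n) i j


namespace PerronAux

variable {k : ℕ}

lemma eval_charpoly' (M : Matrix (Fin k) (Fin k) ℂ) (μ : ℂ) :
    M.charpoly.eval μ = (algebraMap ℂ (Matrix (Fin k) (Fin k) ℂ) μ - M).det := by
  rw [Matrix.charpoly, ← Polynomial.coe_evalRingHom, RingHom.map_det]
  congr 1
  ext i j
  by_cases h : i = j <;>
    simp [h, charmatrix_apply, Matrix.algebraMap_matrix_apply, Matrix.one_apply]

lemma mem_spec_iff (M : Matrix (Fin k) (Fin k) ℂ) (μ : ℂ) :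
    μ ∈ spectrum ℂ M ↔ M.charpoly.eval μ = 0 := by
  rw [spectrum.mem_iff, Matrix.isUnit_iff_isUnit_det, isUnit_iff_ne_zero, not_not,
    eval_charpoly']

lemma spec_finite (M : Matrix (Fin k) (Fin k) ℂ) : (spectrum ℂ M).Finite := by
  have h : spectrum ℂ M ⊆ M.charpoly.rootSet ℂ := by
    intro μ hμ
    rw [mem_spec_iff] at hμ
    rw [Polynomial.mem_rootSet]
    exact ⟨M.charpoly_monic.ne_zero, by simpa using hμ⟩
  exact Set.Finite.subset (Polynomial.rootSet_finite _ _) h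

lemma spec_nonempty (hk : 0 < k) (M : Matrix (Fin k) (Fin k) ℂ) :
    (spectrum ℂ M).Nonempty := by
  have hd : M.charpoly.natDegree = k := by simpa using M.charpoly_natDegree_eq_dim
  have hdeg : M.charpoly.degree ≠ 0 := by
    rw [Polynomial.degree_eq_natDegree M.charpoly_monic.ne_zero, hd]
    exact_mod_cast hk.ne'
  obtain ⟨μ, hμ⟩ := IsAlgClosed.exists_root M.charpoly hdeg
  exact ⟨μ, (mem_spec_iff M μ).2 hμ⟩

end PerronAux

namespace PerronAux

lemma specRad_mem (hk : 0 < k) (A : Matrix (Fin k) (Fin k) ℝ) :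
    specRad A ∈ (fun μ : ℂ => ‖μ‖) '' spectrum ℂ (A.map (algebraMap ℝ ℂ)) :=
  Set.Nonempty.csSup_mem ((spec_nonempty hk _).image _) ((spec_finite _).image _)

lemma abs_le_specRad {A : Matrix (Fin k) (Fin k) ℝ} {μ : ℂ}
    (h : μ ∈ spectrum ℂ (A.map (algebraMap ℝ ℂ))) : ‖μ‖ ≤ specRad A :=
  le_csSup ((spec_finite _).image _).bddAbove ⟨μ, h, rfl⟩

lemma specRad_nonneg (hk : 0 < k) (A : Matrix (Fin k) (Fin k) ℝ) : 0 ≤ specRad A := by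
  obtain ⟨μ, hμ, habs⟩ := specRad_mem hk A
  exact habs ▸ norm_nonneg μ

lemma abs_trace_pow_le (hk : 0 < k) (A : Matrix (Fin k) (Fin k) ℝ) {m : ℕ} (hm : 1 ≤ m) :
    |Matrix.trace (A ^ m)| ≤ k * specRad A ^ m := by
  set B := A.map (algebraMap ℝ ℂ) with hB
  have hBpow : (A ^ m).map (algebraMap ℝ ℂ) = B ^ m := by
    simpa [hB] using map_pow ((algebraMap ℝ ℂ).mapMatrix) A m
  have htr : ((Matrix.trace (A ^ m) : ℝ) : ℂ) = Matrix.trace (B ^ m) := by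
    rw [← hBpow]; simp [Matrix.trace, Matrix.map, Matrix.diag]
  have h1 : Matrix.trace (B ^ m) = ((B ^ m).charpoly.roots).sum :=
    Matrix.trace_eq_sum_roots_charpoly _
  have hroot : ∀ r ∈ (B ^ m).charpoly.roots.map (fun z => ‖z‖), r ≤ specRad A ^ m := by
    intro r hr
    obtain ⟨z, hz, rfl⟩ := Multiset.mem_map.1 hr
    have hz' : z ∈ spectrum ℂ (B ^ m) :=
      (mem_spec_iff _ _).2 (Polynomial.isRoot_of_mem_roots hz)
    rw [spectrum.map_pow_of_pos B hm] at hz'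
    obtain ⟨μ, hμ, rfl⟩ := hz'
    calc ‖μ ^ m‖ = (‖μ‖) ^ m := by rw [norm_pow]
    _ ≤ specRad A ^ m := pow_le_pow_left₀ (norm_nonneg μ) (abs_le_specRad hμ) m
  have hcard : (Multiset.card ((B ^ m).charpoly.roots.map (fun z => ‖z‖))) ≤ k := by
    rw [Multiset.card_map]
    calc Multiset.card (B ^ m).charpoly.roots ≤ (B ^ m).charpoly.natDegree :=
      (B ^ m).charpoly.card_roots'
    _ = k := by simpa using (B ^ m).charpoly_natDegree_eq_dim
  calc |Matrix.trace (A ^ m)| = ‖Matrix.trace (B ^ m)‖ := by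
        rw [← htr, Complex.norm_real]; rfl
  _ ≤ (((B ^ m).charpoly.roots).map (fun z => ‖z‖)).sum := by
        rw [h1]; exact norm_multiset_sum_le _
  _ ≤ (Multiset.card ((B ^ m).charpoly.roots.map (fun z => ‖z‖))) • (specRad A ^ m) :=
        Multiset.sum_le_card_nsmul _ _ hroot
  _ ≤ k * specRad A ^ m := by
        rw [nsmul_eq_mul]
        exact mul_le_mul_of_nonneg_right (by exact_mod_cast hcard)
          (pow_nonneg (specRad_nonneg hk A) m)

variable {A : Matrix (Fin k) (Fin k) ℝ}

lemma pow_entry_nonneg (hA : ∀ i j, 0 ≤ A i j) (n : ℕ) :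
    ∀ i j, 0 ≤ (A ^ n) i j := by
  induction n with
  | zero => intro i j; simp [Matrix.one_apply]; positivity
  | succ n ih =>
    intro i j
    rw [pow_succ, Matrix.mul_apply]
    exact Finset.sum_nonneg fun l _ => mul_nonneg (ih i l) (hA l j)

lemma one_add_pow_entry (A : Matrix (Fin k) (Fin k) ℝ) (N : ℕ) (i j : Fin k) :
    ((1 + A) ^ N) i j = ∑ m ∈ Finset.range (N + 1), (N.choose m : ℝ) * (A ^ m) i j := by
  rw [add_comm, (Commute.one_right A).add_pow]
  rw [Matrix.sum_apply]
  refine Finset.sum_congr rfl fun m hm => ?_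
  rw [one_pow, mul_one, ← Matrix.diagonal_natCast, Matrix.mul_diagonal, mul_comm]

lemma one_add_pow_pos (hA : ∀ i j, 0 ≤ A i j) {N : ℕ} {i j : Fin k}
    {m : ℕ} (hm : m ≤ N) (hpos : 0 < (A ^ m) i j) :
    0 < ((1 + A) ^ N) i j := by
  rw [one_add_pow_entry]
  refine Finset.sum_pos' (fun l _ => mul_nonneg (by positivity) (pow_entry_nonneg hA l i j)) ?_
  refine ⟨m, Finset.mem_range.2 (Nat.lt_succ_of_le hm), ?_⟩
  exact mul_pos (by exact_mod_cast Nat.choose_pos hm) hpos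

/-- mulVec of an entrywise-positive matrix with a nonzero nonneg vector is positive. -/
lemma mulVec_pos {M : Matrix (Fin k) (Fin k) ℝ} (hM : ∀ i j, 0 < M i j)
    {y : Fin k → ℝ} (hy : ∀ j, 0 ≤ y j) {j0 : Fin k} (hj0 : 0 < y j0) (i : Fin k) :
    0 < (M *ᵥ y) i := by
  rw [Matrix.mulVec, dotProduct]
  refine Finset.sum_pos' (fun l _ => mul_nonneg (hM i l).le (hy l)) ?_
  exact ⟨j0, Finset.mem_univ _, mul_pos (hM i j0) hj0⟩

end PerronAux

open PerronAux in
/-- a non-negative irreducible real square matrix that is not the `1 × 1`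
zero matrix has strictly positive spectral radius, and the spectral radius is itself an
eigenvalue. -/
theorem specRad_pos_and_eigenvalue_of_irreducible
    (k : ℕ) (hk : 0 < k) (A : Matrix (Fin k) (Fin k) ℝ)
    (hA : ∀ i j, 0 ≤ A i j) (hirr : MatIrreducible A)
    (hne : ¬ (k = 1 ∧ A = 0)) :
    0 < specRad A ∧
      (specRad A : ℂ) ∈ spectrum ℂ (A.map (algebraMap ℝ ℂ)) := by
  classical
  have i0 : Fin k := ⟨0, hk⟩
  haveI : Nonempty (Fin k) := ⟨i0⟩
  set ρ := specRad A with hρdef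
  set B := A.map (algebraMap ℝ ℂ) with hBdef
  choose nf hnf1 hnf2 using hirr
  -- positivity of ρ
  have hρpos : 0 < ρ := by
    set m := nf i0 i0 with hm
    have htr : 0 < Matrix.trace (A ^ m) := by
      rw [Matrix.trace]
      refine Finset.sum_pos' (fun l _ => pow_entry_nonneg hA m l l) ?_
      exact ⟨i0, Finset.mem_univ _, hnf2 i0 i0⟩
    have h2 : Matrix.trace (A ^ m) ≤ k * ρ ^ m :=
      (le_abs_self _).trans (abs_trace_pow_le hk A (hnf1 i0 i0))
    have hρn : 0 < ρ ^ m := by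
      by_contra hc
      push_neg at hc
      have : (k : ℝ) * ρ ^ m ≤ 0 :=
        mul_nonpos_iff.2 (Or.inl ⟨(Nat.cast_nonneg k), hc⟩)
      linarith
    rcases (specRad_nonneg hk A).lt_or_eq with h | h
    · exact h
    · exfalso
      rw [hρdef, ← h, zero_pow (by have := hnf1 i0 i0; omega)] at hρn
      exact lt_irrefl _ hρn
  refine ⟨hρpos, ?_⟩
  -- extract an eigenvector for an eigenvalue of maximal modulus
  obtain ⟨μ, hμspec, hμabs⟩ := specRad_mem hk A
  have hdet : (algebraMap ℂ (Matrix (Fin k) (Fin k) ℂ) μ - B).det = 0 := by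
    rw [← eval_charpoly']
    exact (mem_spec_iff B μ).1 hμspec
  obtain ⟨v, hv0, hveq⟩ := Matrix.exists_mulVec_eq_zero_iff.2 hdet
  have hBv : B *ᵥ v = μ • v := by
    have h1 := hveq
    rw [Matrix.sub_mulVec, sub_eq_zero] at h1
    rw [← h1, Algebra.algebraMap_eq_smul_one, Matrix.smul_mulVec, Matrix.one_mulVec]
  set x : Fin k → ℝ := fun i => ‖v i‖ with hxdef
  have hxnn : ∀ i, 0 ≤ x i := fun i => norm_nonneg _
  obtain ⟨j0, hj0⟩ : ∃ j, 0 < x j := by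
    by_contra hc
    push_neg at hc
    apply hv0
    funext i
    exact norm_eq_zero.1 (le_antisymm (hc i) (hxnn i))
  have hxsub : ∀ i, ρ * x i ≤ (A *ᵥ x) i := by
    intro i
    have h1 : ρ * x i = ‖(B *ᵥ v) i‖ := by
      rw [hBv, hρdef, ← hμabs]
      simp [hxdef, _root_.map_mul]
    rw [h1]
    calc ‖(B *ᵥ v) i‖ = ‖∑ j, B i j * v j‖ := by
          rw [Matrix.mulVec, dotProduct]
    _ ≤ ∑ j, ‖B i j * v j‖ := by
          simpa using (norm_sum_le Finset.univ (fun j => B i j * v j))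
    _ = ∑ j, A i j * x j := by
          refine Finset.sum_congr rfl fun j _ => ?_
          rw [norm_mul]
          congr 1
          simp [hBdef, Matrix.map_apply, Complex.norm_real, abs_of_nonneg (hA i j)]
    _ = (A *ᵥ x) i := by rw [Matrix.mulVec, dotProduct]
  by_cases hcase : A *ᵥ x = ρ • x
  · -- ρ is an eigenvalue with real eigenvector x
    set xc : Fin k → ℂ := fun i => (x i : ℂ) with hxcdef
    have hxc0 : xc ≠ 0 := by
      intro h
      have := congrFun h j0
      simp only [hxcdef, Pi.zero_apply, Complex.ofReal_eq_zero] at this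
      exact hj0.ne' this
    have hBxc : (algebraMap ℂ (Matrix (Fin k) (Fin k) ℂ) (ρ : ℂ) - B) *ᵥ xc = 0 := by
      funext i
      have hAx : (A *ᵥ x) i = ρ * x i := by rw [hcase]; simp [Pi.smul_apply]
      rw [Matrix.sub_mulVec]
      simp only [Pi.sub_apply, Pi.zero_apply, sub_eq_zero]
      rw [Algebra.algebraMap_eq_smul_one, Matrix.smul_mulVec, Matrix.one_mulVec]
      calc ((ρ : ℂ) • xc) i = ((ρ * x i : ℝ) : ℂ) := by
            simp [hxcdef]
      _ = (((A *ᵥ x) i : ℝ) : ℂ) := by rw [hAx]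
      _ = (B *ᵥ xc) i := by
            rw [Matrix.mulVec, Matrix.mulVec, dotProduct, dotProduct]
            push_cast
            refine Finset.sum_congr rfl fun j _ => ?_
            simp [hBdef, Matrix.map_apply, hxcdef]
    have hdet2 : (algebraMap ℂ (Matrix (Fin k) (Fin k) ℂ) (ρ : ℂ) - B).det = 0 :=
      Matrix.exists_mulVec_eq_zero_iff.1 ⟨xc, hxc0, hBxc⟩
    exact (mem_spec_iff B (ρ : ℂ)).2 (by rw [eval_charpoly', hdet2])
  · exfalso
    -- the `w` defect vector is nonzero; we will contradict maximality of ρ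
    set N := Finset.sup Finset.univ (fun p : Fin k × Fin k => nf p.1 p.2) with hNdef
    have hnfN : ∀ i j, nf i j ≤ N := fun i j =>
      Finset.le_sup (f := fun p : Fin k × Fin k => nf p.1 p.2) (Finset.mem_univ (i, j))
    set M := (1 + A) ^ N with hMdef
    have hMpos : ∀ i j, 0 < M i j := fun i j => one_add_pow_pos hA (hnfN i j) (hnf2 i j)
    set w : Fin k → ℝ := fun i => (A *ᵥ x) i - ρ * x i with hwdef
    have hwnn : ∀ i, 0 ≤ w i := fun i => sub_nonneg.2 (hxsub i)
    obtain ⟨i1, hi1⟩ : ∃ i, 0 < w i := by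
      by_contra hc
      push_neg at hc
      apply hcase
      funext i
      have h0 : w i = 0 := le_antisymm (hc i) (hwnn i)
      have h1 : (A *ᵥ x) i - ρ * x i = 0 := h0
      have := sub_eq_zero.1 h1
      simpa [Pi.smul_apply, smul_eq_mul] using this
    set u := M *ᵥ x with hudef
    have hu : ∀ i, 0 < u i := fun i => mulVec_pos hMpos hxnn hj0 i
    set z := M *ᵥ w with hzdef
    have hz : ∀ i, 0 < z i := fun i => mulVec_pos hMpos hwnn hi1 i
    have hcommA : Commute A M := by
      rw [hMdef]
      exact (Commute.add_right (Commute.one_right A) (Commute.refl A)).pow_right N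
    have hAx : A *ᵥ x = ρ • x + w := by
      funext i
      simp only [hwdef, Pi.add_apply, Pi.smul_apply, smul_eq_mul]
      ring
    have hkey : A *ᵥ u = ρ • u + z := by
      rw [hudef, Matrix.mulVec_mulVec, hcommA.eq, ← Matrix.mulVec_mulVec, hAx,
        Matrix.mulVec_add, Matrix.mulVec_smul]
    set δ := Finset.univ.inf' Finset.univ_nonempty (fun i => z i / u i) with hδdef
    have hδpos : 0 < δ := by
      rw [hδdef, Finset.lt_inf'_iff]
      exact fun i _ => div_pos (hz i) (hu i)
    have hδle : ∀ i, δ * u i ≤ z i := by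
      intro i
      have h1 : δ ≤ z i / u i := Finset.inf'_le _ (Finset.mem_univ i)
      calc δ * u i ≤ (z i / u i) * u i := mul_le_mul_of_nonneg_right h1 (hu i).le
      _ = z i := div_mul_cancel₀ _ (hu i).ne'
    have hρδ : 0 ≤ ρ + δ := by linarith
    have hgrow : ∀ i, (ρ + δ) * u i ≤ (A *ᵥ u) i := by
      intro i
      rw [hkey]
      simp only [Pi.add_apply, Pi.smul_apply, smul_eq_mul]
      nlinarith [hδle i]
    have hiter : ∀ n, ∀ i, (ρ + δ) ^ n * u i ≤ ((A ^ n) *ᵥ u) i := by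
      intro n
      induction n with
      | zero => intro i; simp [Matrix.one_mulVec]
      | succ n ih =>
        intro i
        have h1 : ((A ^ (n + 1)) *ᵥ u) i = ∑ j, A i j * ((A ^ n) *ᵥ u) j := by
          rw [pow_succ', ← Matrix.mulVec_mulVec, Matrix.mulVec, dotProduct]
        rw [h1]
        calc (ρ + δ) ^ (n + 1) * u i = (ρ + δ) ^ n * ((ρ + δ) * u i) := by ring
        _ ≤ (ρ + δ) ^ n * (A *ᵥ u) i :=
            mul_le_mul_of_nonneg_left (hgrow i) (pow_nonneg hρδ n)
        _ = ∑ j, A i j * ((ρ + δ) ^ n * u j) := by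
            rw [Matrix.mulVec, dotProduct, Finset.mul_sum]
            exact Finset.sum_congr rfl fun j _ => by ring
        _ ≤ ∑ j, A i j * ((A ^ n) *ᵥ u) j :=
            Finset.sum_le_sum fun j _ => mul_le_mul_of_nonneg_left (ih j) (hA i j)
    set usum := ∑ i, u i with husumdef
    have husum : 0 < usum := Finset.sum_pos (fun i _ => hu i) Finset.univ_nonempty
    set umax := Finset.univ.sup' Finset.univ_nonempty u with humaxdef
    have hule : ∀ j, u j ≤ umax := fun j => Finset.le_sup' u (Finset.mem_univ j)
    have humax : 0 < umax := lt_of_lt_of_le (hu i0) (hule i0)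
    set S : ℕ → ℝ := fun n => ∑ i, ∑ j, (A ^ n) i j with hSdef
    have hS : ∀ n, (ρ + δ) ^ n * usum ≤ umax * S n := by
      intro n
      calc (ρ + δ) ^ n * usum = ∑ i, (ρ + δ) ^ n * u i := by
            rw [husumdef, Finset.mul_sum]
      _ ≤ ∑ i, ((A ^ n) *ᵥ u) i := Finset.sum_le_sum fun i _ => hiter n i
      _ = ∑ i, ∑ j, (A ^ n) i j * u j := by
            exact Finset.sum_congr rfl fun i _ => by rw [Matrix.mulVec, dotProduct]
      _ ≤ ∑ i, ∑ j, (A ^ n) i j * umax :=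
            Finset.sum_le_sum fun i _ => Finset.sum_le_sum fun j _ =>
              mul_le_mul_of_nonneg_left (hule j) (pow_entry_nonneg hA n i j)
      _ = umax * S n := by
            simp only [hSdef, Finset.mul_sum]
            exact Finset.sum_congr rfl fun i _ =>
              Finset.sum_congr rfl fun j _ => by ring
    set m0 := Finset.univ.inf' Finset.univ_nonempty (fun p : Fin k × Fin k => M p.1 p.2)
      with hm0def
    have hm0pos : 0 < m0 := by
      rw [hm0def, Finset.lt_inf'_iff]
      exact fun p _ => hMpos p.1 p.2
    have hm0le : ∀ i j, m0 ≤ M i j := fun i j =>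
      Finset.inf'_le (f := fun p : Fin k × Fin k => M p.1 p.2) (Finset.mem_univ (i, j))
    have hMnn : ∀ i j, 0 ≤ M i j := fun i j => (hMpos i j).le
    have htrlow : ∀ n, m0 ^ 2 * S n ≤ Matrix.trace (M * (A ^ n) * M) := by
      intro n
      have hMAnn : ∀ i l, 0 ≤ (M * (A ^ n)) i l := by
        intro i l
        rw [Matrix.mul_apply]
        exact Finset.sum_nonneg fun j _ => mul_nonneg (hMnn i j) (pow_entry_nonneg hA n j l)
      have hdiagnn : ∀ i, 0 ≤ (M * (A ^ n) * M) i i := by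
        intro i
        rw [Matrix.mul_apply]
        exact Finset.sum_nonneg fun l _ => mul_nonneg (hMAnn i l) (hMnn l i)
      have hdiag : m0 ^ 2 * S n ≤ (M * (A ^ n) * M) i0 i0 := by
        rw [Matrix.mul_apply]
        have hterm : ∀ l, (m0 * ∑ j, (A ^ n) j l) * m0 ≤ (M * (A ^ n)) i0 l * M l i0 := by
          intro l
          have h1 : m0 * ∑ j, (A ^ n) j l ≤ (M * (A ^ n)) i0 l := by
            rw [Matrix.mul_apply, Finset.mul_sum]
            exact Finset.sum_le_sum fun j _ =>
              mul_le_mul_of_nonneg_right (hm0le i0 j) (pow_entry_nonneg hA n j l)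
          have h2 : 0 ≤ m0 * ∑ j, (A ^ n) j l :=
            mul_nonneg hm0pos.le
              (Finset.sum_nonneg fun j _ => pow_entry_nonneg hA n j l)
          exact mul_le_mul h1 (hm0le l i0) hm0pos.le (h2.trans h1)
        calc m0 ^ 2 * S n = ∑ l, (m0 * ∑ j, (A ^ n) j l) * m0 := by
              have hsw : S n = ∑ l, ∑ j, (A ^ n) j l := by
                simp only [hSdef]
                exact Finset.sum_comm
              rw [hsw, Finset.mul_sum]
              exact Finset.sum_congr rfl fun l _ => by ring
        _ ≤ ∑ l, (M * (A ^ n)) i0 l * M l i0 := Finset.sum_le_sum fun l _ => hterm l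
      calc m0 ^ 2 * S n ≤ (M * (A ^ n) * M) i0 i0 := hdiag
      _ ≤ Matrix.trace (M * (A ^ n) * M) :=
          Finset.single_le_sum (fun i _ => hdiagnn i) (Finset.mem_univ i0)
    -- upper bound for the trace via the spectral radius
    set q := max 1 ρ with hqdef
    have hq1 : 1 ≤ q := le_max_left _ _
    have hρq : ρ ≤ q := le_max_right _ _
    have hexp : (1 + A) ^ (2 * N) = ∑ m ∈ Finset.range (2 * N + 1),
        ((2 * N).choose m : ℝ) • A ^ m := by
      rw [add_comm, (Commute.one_right A).add_pow]
      refine Finset.sum_congr rfl fun m hm => ?_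
      rw [one_pow, mul_one]
      ext i j
      rw [← Matrix.diagonal_natCast, Matrix.mul_diagonal, Matrix.smul_apply, smul_eq_mul,
        mul_comm]
    have hMMA : ∀ n, M * (A ^ n) * M = ((1 + A) ^ (2 * N)) * A ^ n := by
      intro n
      calc M * (A ^ n) * M = M * ((A ^ n) * M) := by rw [mul_assoc]
      _ = M * (M * (A ^ n)) := by rw [(hcommA.pow_left n).eq]
      _ = (M * M) * (A ^ n) := by rw [mul_assoc]
      _ = ((1 + A) ^ (2 * N)) * A ^ n := by rw [hMdef, ← pow_add, two_mul]
    have htrup : ∀ n, 1 ≤ n →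
        Matrix.trace (M * (A ^ n) * M) ≤ ((2 : ℝ) ^ (2 * N) * k * q ^ (2 * N)) * ρ ^ n := by
      intro n hn
      rw [hMMA n, hexp, Finset.sum_mul, Matrix.trace_sum]
      have hterm : ∀ m ∈ Finset.range (2 * N + 1),
          Matrix.trace ((((2 * N).choose m : ℝ) • A ^ m) * A ^ n)
            ≤ ((2 * N).choose m : ℝ) * ((k : ℝ) * q ^ (2 * N) * ρ ^ n) := by
        intro m hm
        have hm' : m ≤ 2 * N := by
          have := Finset.mem_range.1 hm; omega
        rw [smul_mul_assoc, Matrix.trace_smul, ← pow_add]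
        have h1 : Matrix.trace (A ^ (m + n)) ≤ (k : ℝ) * ρ ^ (m + n) :=
          (le_abs_self _).trans (abs_trace_pow_le hk A (by omega))
        have h2 : ρ ^ (m + n) ≤ q ^ (2 * N) * ρ ^ n := by
          rw [pow_add]
          have h3 : ρ ^ m ≤ q ^ m := pow_le_pow_left₀ hρpos.le hρq m
          have h4 : q ^ m ≤ q ^ (2 * N) := pow_le_pow_right₀ hq1 hm'
          exact mul_le_mul_of_nonneg_right (h3.trans h4) (pow_nonneg hρpos.le n)
        calc ((2 * N).choose m : ℝ) • Matrix.trace (A ^ (m + n))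
            = ((2 * N).choose m : ℝ) * Matrix.trace (A ^ (m + n)) := smul_eq_mul ..
        _ ≤ ((2 * N).choose m : ℝ) * ((k : ℝ) * (q ^ (2 * N) * ρ ^ n)) := by
            refine mul_le_mul_of_nonneg_left ?_ (Nat.cast_nonneg _)
            calc Matrix.trace (A ^ (m + n)) ≤ (k : ℝ) * ρ ^ (m + n) := h1
            _ ≤ (k : ℝ) * (q ^ (2 * N) * ρ ^ n) :=
                mul_le_mul_of_nonneg_left h2 (Nat.cast_nonneg _)
        _ = ((2 * N).choose m : ℝ) * ((k : ℝ) * q ^ (2 * N) * ρ ^ n) := by ring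
      calc ∑ m ∈ Finset.range (2 * N + 1),
            Matrix.trace ((((2 * N).choose m : ℝ) • A ^ m) * A ^ n)
          ≤ ∑ m ∈ Finset.range (2 * N + 1),
            ((2 * N).choose m : ℝ) * ((k : ℝ) * q ^ (2 * N) * ρ ^ n) :=
            Finset.sum_le_sum hterm
      _ = (∑ m ∈ Finset.range (2 * N + 1), ((2 * N).choose m : ℝ)) *
            ((k : ℝ) * q ^ (2 * N) * ρ ^ n) := by rw [Finset.sum_mul]
      _ = ((2 : ℝ) ^ (2 * N) * k * q ^ (2 * N)) * ρ ^ n := by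
            have hch : (∑ m ∈ Finset.range (2 * N + 1), ((2 * N).choose m : ℝ))
                = (2 : ℝ) ^ (2 * N) := by
              rw [← Nat.cast_sum]
              norm_cast
              exact Nat.sum_range_choose (2 * N)
            rw [hch]; ring
    -- final contradiction
    have hfin : ∀ n, 1 ≤ n →
        (m0 ^ 2 * usum) * (ρ + δ) ^ n
          ≤ (umax * ((2 : ℝ) ^ (2 * N) * k * q ^ (2 * N))) * ρ ^ n := by
      intro n hn
      have h1 := hS n
      have h2 := htrlow n
      have h3 := htrup n hn
      calc (m0 ^ 2 * usum) * (ρ + δ) ^ n = m0 ^ 2 * ((ρ + δ) ^ n * usum) := by ring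
      _ ≤ m0 ^ 2 * (umax * S n) := mul_le_mul_of_nonneg_left h1 (by positivity)
      _ = umax * (m0 ^ 2 * S n) := by ring
      _ ≤ umax * Matrix.trace (M * (A ^ n) * M) := mul_le_mul_of_nonneg_left h2 humax.le
      _ ≤ umax * (((2 : ℝ) ^ (2 * N) * k * q ^ (2 * N)) * ρ ^ n) :=
          mul_le_mul_of_nonneg_left h3 humax.le
      _ = (umax * ((2 : ℝ) ^ (2 * N) * k * q ^ (2 * N))) * ρ ^ n := by ring
    set c := m0 ^ 2 * usum with hcdef
    have hc : 0 < c := by positivity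
    set C := umax * ((2 : ℝ) ^ (2 * N) * k * q ^ (2 * N)) with hCdef
    have hq0 : 0 < q := lt_of_lt_of_le one_pos hq1
    have hC : 0 < C := by
      have hk' : (0 : ℝ) < k := Nat.cast_pos.2 hk
      positivity
    have hr1 : 1 < (ρ + δ) / ρ := by
      rw [lt_div_iff₀ hρpos]; linarith
    obtain ⟨n, hn⟩ := pow_unbounded_of_one_lt (C / c) hr1
    have hle : ((ρ + δ) / ρ) ^ n ≤ ((ρ + δ) / ρ) ^ (n + 1) :=
      pow_le_pow_right₀ hr1.le (Nat.le_succ n)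
    have hub : ((ρ + δ) / ρ) ^ (n + 1) ≤ C / c := by
      rw [div_pow, div_le_div_iff₀ (by positivity) hc]
      calc (ρ + δ) ^ (n + 1) * c = c * (ρ + δ) ^ (n + 1) := by ring
      _ ≤ C * ρ ^ (n + 1) := hfin (n + 1) (by omega)
    linarith
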